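/- arXiv:2102.01735 — 5 statements merged into one kernel-verified Lean document; each statement's English description precedes it below -/
import Mathlib

section
/- For any positive real numbers σ₁, σ₂, σ₃ and all t ≥ 0, sup over |ξ| ≥ 1 of |ξ|^{-σ₁} · exp(-σ₂ · t · |ξ|^{-σ₃}) is at most (1 + σ₁/(σ₂σ₃))^{σ₁/σ₃} · (1 + t)^{-σ₁/σ₃}. -/
open Real

theorem stmt_1 (σ₁ σ₂ σ₃ : ℝ) (h1 : 0 < σ₁) (h2 : 0 < σ₂) (h3 : 0 < σ₃)
    (t : ℝ) (ht : 0 ≤ t) :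
    ∀ ξ : ℝ, 1 ≤ |ξ| →
      |ξ| ^ (-σ₁) * Real.exp (-σ₂ * t * |ξ| ^ (-σ₃))
        ≤ (1 + σ₁ / (σ₂ * σ₃)) ^ (σ₁ / σ₃) * (1 + t) ^ (-σ₁ / σ₃) := by
  intro ξ hξ
  set x := |ξ| with hxdef
  have hx0 : (0:ℝ) < x := lt_of_lt_of_le one_pos hξ
  set a : ℝ := σ₁ / σ₃ with ha
  have ha0 : 0 < a := div_pos h1 h3
  set y : ℝ := x ^ (-σ₃) with hy
  have hy0 : 0 < y := Real.rpow_pos_of_pos hx0 _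
  have hy1 : y ≤ 1 := Real.rpow_le_one_of_one_le_of_nonpos hξ (by linarith)
  set s : ℝ := σ₂ * t * y / a with hs
  have hs0 : 0 ≤ s := by positivity
  have ht1 : (0:ℝ) < 1 + t := by linarith
  -- rewrite left side
  have e1 : x ^ (-σ₁) = y ^ a := by
    rw [hy, ← Real.rpow_mul hx0.le]
    congr 1
    rw [ha]; field_simp
  have e2 : Real.exp (-σ₂ * t * y) = (Real.exp (-s)) ^ a := by
    rw [← Real.exp_mul]
    congr 1
    rw [hs]
    field_simp
  have e3 : x ^ (-σ₁) * Real.exp (-σ₂ * t * y) = (y * Real.exp (-s)) ^ a := by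
    rw [e1, e2, Real.mul_rpow hy0.le (Real.exp_nonneg _)]
  -- rewrite right side
  have e4 : 1 + σ₁ / (σ₂ * σ₃) = 1 + a / σ₂ := by
    rw [ha]; field_simp
  have e5 : (1 + a / σ₂) ^ (σ₁ / σ₃) * (1 + t) ^ (-σ₁ / σ₃)
      = ((1 + a / σ₂) / (1 + t)) ^ a := by
    have hA : (0:ℝ) ≤ 1 + a / σ₂ := by positivity
    rw [Real.div_rpow hA ht1.le, neg_div, Real.rpow_neg ht1.le, ← ha]
    exact (div_eq_mul_inv _ _).symm
  rw [e3, e4, e5]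
  apply Real.rpow_le_rpow (by positivity) _ ha0.le
  -- key inequality
  have hes : 1 + s ≤ Real.exp s := by linarith [Real.add_one_le_exp s]
  have hexp0 : (0:ℝ) < Real.exp s := Real.exp_pos s
  rw [Real.exp_neg, ← div_eq_mul_inv, div_le_div_iff₀ hexp0 ht1]
  have key1 : (a / σ₂) * s = t * y := by
    rw [hs]; field_simp
  have step : y * (1 + t) ≤ (1 + a / σ₂) * (1 + s) := by
    have haσ : 0 ≤ a / σ₂ := by positivity
    nlinarith [mul_nonneg ht hy0.le]
  calc y * (1 + t) ≤ (1 + a / σ₂) * (1 + s) := step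
    _ ≤ (1 + a / σ₂) * Real.exp s := by
        apply mul_le_mul_of_nonneg_left hes (by positivity)
end

section
/- Let k₁, k₂, k₃, k₄ > 0 and define the energy Ê(ξ,t) = (1/2)(k₁|v̂|² + |û|² + k₂|ẑ|² + |ŷ|² + k₃|φ̂|² + |θ̂|² + k₄|σ̂|² + |η̂|²) for complex-valued functions v̂, û, ẑ, ŷ, φ̂, θ̂, σ̂, η̂ of t (depending on a parameter ξ). If these functions satisfy the ODE system: v̂' = iξû + ŷ + θ̂; û' = ik₁ξv̂ − iτ₁γξη̂; ẑ' = iξŷ; ŷ' = ik₂ξẑ − k₁v̂ − iτ₂γξη̂; φ̂' = iξθ̂; θ̂' = ik₃ξφ̂ − k₁v̂ − iτ₃γξη̂; σ̂' = iξη̂; η̂' = ik₄ξσ̂ − k₅ξ^{2ε₀}η̂ − iγξ(τ₁û + τ₂ŷ + τ₃θ̂), where γ ∈ ℝ, k₅ > 0, ε₀ ∈ {0,1} and (τ₁,τ₂,τ₃) ∈ ℝ³, then (d/dt)Ê(ξ,t) = −k₅ ξ^{2ε₀} |η̂(ξ,t)|². -/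
open Complex

lemma normsq_hasDerivAt (f : ℝ → ℂ) (hf : Differentiable ℝ f) (t : ℝ) :
    HasDerivAt (fun s => ‖f s‖ ^ 2) (2 * (deriv f t * starRingEnd ℂ (f t)).re) t := by
  have h : HasDerivAt f (deriv f t) t := (hf t).hasDerivAt
  have hre : HasDerivAt (fun s => (f s).re) ((deriv f t).re) t :=
    (Complex.reCLM.hasFDerivAt.comp_hasDerivAt t h)
  have him : HasDerivAt (fun s => (f s).im) ((deriv f t).im) t :=
    (Complex.imCLM.hasFDerivAt.comp_hasDerivAt t h)
  have h2 := (hre.mul hre).add (him.mul him)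
  have heq : (fun s => ‖f s‖ ^ 2) = fun s => (f s).re * (f s).re + (f s).im * (f s).im := by
    funext s
    rw [← Complex.normSq_apply, ← Complex.sq_norm]
  rw [heq]
  convert h2 using 1
  · rfl
  · rfl
  · rfl
  simp [Complex.mul_re]
  ring

theorem stmt_5 (k₁ k₂ k₃ k₄ k₅ γ τ₁ τ₂ τ₃ ξ : ℝ) (ε₀ : ℕ)
    (hk₁ : 0 < k₁) (hk₂ : 0 < k₂) (hk₃ : 0 < k₃) (hk₄ : 0 < k₄) (hk₅ : 0 < k₅)
    (hε : ε₀ = 0 ∨ ε₀ = 1)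
    (v u z y φ θ σ η : ℝ → ℂ)
    (hv : Differentiable ℝ v) (hu : Differentiable ℝ u)
    (hz : Differentiable ℝ z) (hy : Differentiable ℝ y)
    (hφ : Differentiable ℝ φ) (hθ : Differentiable ℝ θ)
    (hσ : Differentiable ℝ σ) (hη : Differentiable ℝ η)
    (e1 : ∀ t, deriv v t = Complex.I * ξ * u t + y t + θ t)
    (e2 : ∀ t, deriv u t = Complex.I * k₁ * ξ * v t - Complex.I * τ₁ * γ * ξ * η t)
    (e3 : ∀ t, deriv z t = Complex.I * ξ * y t)
    (e4 : ∀ t, deriv y t = Complex.I * k₂ * ξ * z t - k₁ * v t - Complex.I * τ₂ * γ * ξ * η t)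
    (e5 : ∀ t, deriv φ t = Complex.I * ξ * θ t)
    (e6 : ∀ t, deriv θ t = Complex.I * k₃ * ξ * φ t - k₁ * v t - Complex.I * τ₃ * γ * ξ * η t)
    (e7 : ∀ t, deriv σ t = Complex.I * ξ * η t)
    (e8 : ∀ t, deriv η t = Complex.I * k₄ * ξ * σ t - (k₅ * ξ ^ (2 * ε₀) : ℝ) * η t
            - Complex.I * γ * ξ * (τ₁ * u t + τ₂ * y t + τ₃ * θ t))
    (t : ℝ) :
    deriv (fun s =>
        (1 / 2) * (k₁ * ‖v s‖ ^ 2 + ‖u s‖ ^ 2 + k₂ * ‖z s‖ ^ 2 + ‖y s‖ ^ 2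
          + k₃ * ‖φ s‖ ^ 2 + ‖θ s‖ ^ 2 + k₄ * ‖σ s‖ ^ 2 + ‖η s‖ ^ 2)) t
      = -k₅ * ξ ^ (2 * ε₀) * ‖η t‖ ^ 2 := by
  have Hv := normsq_hasDerivAt v hv t
  have Hu := normsq_hasDerivAt u hu t
  have Hz := normsq_hasDerivAt z hz t
  have Hy := normsq_hasDerivAt y hy t
  have Hφ := normsq_hasDerivAt φ hφ t
  have Hθ := normsq_hasDerivAt θ hθ t
  have Hσ := normsq_hasDerivAt σ hσ t
  have Hη := normsq_hasDerivAt η hη t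
  have H : HasDerivAt (fun s =>
      (1 / 2 : ℝ) * (k₁ * ‖v s‖ ^ 2 + ‖u s‖ ^ 2 + k₂ * ‖z s‖ ^ 2 + ‖y s‖ ^ 2
          + k₃ * ‖φ s‖ ^ 2 + ‖θ s‖ ^ 2 + k₄ * ‖σ s‖ ^ 2 + ‖η s‖ ^ 2))
      ((1 / 2 : ℝ) * (k₁ * (2 * (deriv v t * starRingEnd ℂ (v t)).re)
        + 2 * (deriv u t * starRingEnd ℂ (u t)).re
        + k₂ * (2 * (deriv z t * starRingEnd ℂ (z t)).re)
        + 2 * (deriv y t * starRingEnd ℂ (y t)).re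
        + k₃ * (2 * (deriv φ t * starRingEnd ℂ (φ t)).re)
        + 2 * (deriv θ t * starRingEnd ℂ (θ t)).re
        + k₄ * (2 * (deriv σ t * starRingEnd ℂ (σ t)).re)
        + 2 * (deriv η t * starRingEnd ℂ (η t)).re)) t :=
    (((((((Hv.const_mul k₁).add Hu).add (Hz.const_mul k₂)).add Hy).add
      (Hφ.const_mul k₃)).add Hθ).add (Hσ.const_mul k₄)).add Hη |>.const_mul (1/2 : ℝ)
  rw [H.deriv, e1, e2, e3, e4, e5, e6, e7, e8]
  simp only [Complex.mul_re, Complex.mul_im, Complex.sub_re, Complex.sub_im,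
    Complex.add_re, Complex.add_im, Complex.I_re, Complex.I_im,
    Complex.ofReal_re, Complex.ofReal_im, Complex.conj_re, Complex.conj_im,
    Complex.sq_norm, Complex.normSq_apply]
  ring
end

section
/- Let f : ℝ → ℝ with f(ξ) ≥ (1/5)ξ⁶ for |ξ| ≤ 1, let c > 0, j ∈ ℕ, and let Û₀ : ℝ → ℂⁿ be bounded with ‖Û₀‖_∞ ≤ ‖U₀‖_{L¹}. Then ∫_{|ξ|≤1} ξ^{2j} e^{−c f(ξ) t} |Û₀(ξ)|² dξ ≤ C (1+t)^{−(1+2j)/6} ‖U₀‖_{L¹}² for all t ≥ 0, where C depends only on c and j. -/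
open MeasureTheory Real

private lemma aux_integrable {a : ℝ} (ha : 0 < a) (j : ℕ) :
    Integrable fun x : ℝ => x ^ (2 * j) * Real.exp (-a * x ^ 6) := by
  have key : IntegrableOn (fun x : ℝ => x ^ (2 * j) * Real.exp (-a * x ^ 6)) (Set.Ioi 0) := by
    have h := integrableOn_rpow_mul_exp_neg_mul_rpow (p := 6) (s := (2 * j : ℝ)) (b := a)
      (by linarith [Nat.cast_nonneg (α := ℝ) j]) (by norm_num) ha
    refine h.congr_fun (fun x hx => ?_) measurableSet_Ioi
    beta_reduce
    rw [show ((2 * j : ℝ)) = ((2 * j : ℕ) : ℝ) by push_cast; ring, Real.rpow_natCast,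
      show ((6 : ℝ)) = ((6 : ℕ) : ℝ) by norm_num, Real.rpow_natCast]
  have heven : ∀ x : ℝ, (-x) ^ (2 * j) * Real.exp (-a * (-x) ^ 6)
      = x ^ (2 * j) * Real.exp (-a * x ^ 6) := by
    intro x
    rw [Even.neg_pow (even_two_mul j), Even.neg_pow (⟨3, rfl⟩ : Even 6)]
  rw [← integrableOn_univ, ← Set.Iio_union_Ici (a := (0 : ℝ)), integrableOn_union,
    integrableOn_Ici_iff_integrableOn_Ioi]
  refine ⟨?_, key⟩
  rw [← (Measure.measurePreserving_neg (volume : Measure ℝ)).integrableOn_comp_preimage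
    (Homeomorph.neg ℝ).measurableEmbedding]
  simp only [Function.comp_def, Set.neg_preimage, Set.neg_Iio, neg_zero]
  exact key.congr_fun (fun x _ => (heven x).symm) measurableSet_Ioi

private lemma aux_scaling {a : ℝ} (ha : 0 < a) (j : ℕ) {s : ℝ} (hs : 1 ≤ s) :
    ∫ ξ in Set.Icc (-1 : ℝ) 1, ξ ^ (2 * j) * Real.exp (-(a * s) * ξ ^ 6)
      ≤ s ^ (-(1 + 2 * (j : ℝ)) / 6) * ∫ x : ℝ, x ^ (2 * j) * Real.exp (-a * x ^ 6) := by
  have hs0 : (0 : ℝ) < s := lt_of_lt_of_le one_pos hs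
  set r : ℝ := s ^ ((1 : ℝ) / 6) with hrdef
  have hr : 0 < r := Real.rpow_pos_of_pos hs0 _
  have hr6 : r ^ 6 = s := by
    rw [hrdef, ← Real.rpow_natCast (s ^ ((1 : ℝ) / 6)) 6, ← Real.rpow_mul hs0.le]
    norm_num
  have hpt : ∀ ξ : ℝ, ξ ^ (2 * j) * Real.exp (-(a * s) * ξ ^ 6)
      = (r ^ (2 * j))⁻¹ * ((r * ξ) ^ (2 * j) * Real.exp (-a * (r * ξ) ^ 6)) := by
    intro ξ
    have h1 : -a * (r * ξ) ^ 6 = -(a * s) * ξ ^ 6 := by rw [mul_pow, hr6]; ring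
    rw [h1, mul_pow]
    field_simp
  have hJ : Integrable fun x : ℝ => x ^ (2 * j) * Real.exp (-a * x ^ 6) := aux_integrable ha j
  have hJnn : (0 : ℝ) ≤ ∫ x : ℝ, x ^ (2 * j) * Real.exp (-a * x ^ 6) :=
    integral_nonneg fun x => mul_nonneg ((even_two_mul j).pow_nonneg x) (Real.exp_pos _).le
  calc ∫ ξ in Set.Icc (-1 : ℝ) 1, ξ ^ (2 * j) * Real.exp (-(a * s) * ξ ^ 6)
      = (r ^ (2 * j))⁻¹ * ∫ ξ in Set.Icc (-1 : ℝ) 1,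
          ((r * ξ) ^ (2 * j) * Real.exp (-a * (r * ξ) ^ 6)) := by
        simp_rw [hpt]; rw [MeasureTheory.integral_const_mul]
    _ = (r ^ (2 * j))⁻¹ * ∫ ξ in (-1 : ℝ)..1,
          ((r * ξ) ^ (2 * j) * Real.exp (-a * (r * ξ) ^ 6)) := by
        rw [integral_Icc_eq_integral_Ioc, intervalIntegral.integral_of_le (by norm_num)]
    _ = (r ^ (2 * j))⁻¹ * (r⁻¹ * ∫ x in (r * -1)..(r * 1),
          (x ^ (2 * j) * Real.exp (-a * x ^ 6))) := by
        rw [intervalIntegral.integral_comp_mul_left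
          (fun x => x ^ (2 * j) * Real.exp (-a * x ^ 6)) hr.ne', smul_eq_mul]
    _ ≤ (r ^ (2 * j))⁻¹ * (r⁻¹ * ∫ x : ℝ, x ^ (2 * j) * Real.exp (-a * x ^ 6)) := by
        apply mul_le_mul_of_nonneg_left _ (by positivity)
        apply mul_le_mul_of_nonneg_left _ (by positivity)
        rw [intervalIntegral.integral_of_le (by nlinarith : r * -1 ≤ r * 1)]
        exact setIntegral_le_integral hJ (Filter.Eventually.of_forall fun x => mul_nonneg ((even_two_mul j).pow_nonneg x) (Real.exp_pos _).le)
    _ = s ^ (-(1 + 2 * (j : ℝ)) / 6) * ∫ x : ℝ, x ^ (2 * j) * Real.exp (-a * x ^ 6) := by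
        rw [← mul_assoc]
        congr 1
        rw [show (r ^ (2 * j))⁻¹ * r⁻¹ = (r ^ (2 * j + 1))⁻¹ by rw [pow_succ]; ring]
        rw [hrdef, ← Real.rpow_natCast (s ^ ((1 : ℝ) / 6)) (2 * j + 1), ← Real.rpow_mul hs0.le,
          ← Real.rpow_neg hs0.le]
        congr 1
        push_cast
        ring

theorem stmt_10 (c : ℝ) (hc : 0 < c) (j : ℕ) :
    ∃ C > 0, ∀ (n : ℕ) (f : ℝ → ℝ) (U₀hat : ℝ → EuclideanSpace ℂ (Fin n)) (M : ℝ),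
      (∀ ξ : ℝ, |ξ| ≤ 1 → f ξ ≥ (1 / 5) * ξ ^ 6) →
      (∀ ξ : ℝ, ‖U₀hat ξ‖ ≤ M) →
      ∀ t : ℝ, 0 ≤ t →
        ∫ ξ in Set.Icc (-1 : ℝ) 1,
            ξ ^ (2 * j) * Real.exp (-c * f ξ * t) * ‖U₀hat ξ‖ ^ 2
          ≤ C * (1 + t) ^ (-(1 + 2 * (j : ℝ)) / 6) * M ^ 2 := by
  set a : ℝ := c / 5 with hadef
  have ha : 0 < a := by positivity
  set J : ℝ := ∫ x : ℝ, x ^ (2 * j) * Real.exp (-a * x ^ 6) with hJdef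
  have hJnn : (0 : ℝ) ≤ J := integral_nonneg fun x => mul_nonneg ((even_two_mul j).pow_nonneg x) (Real.exp_pos _).le
  refine ⟨Real.exp a * (J + 1), by positivity, ?_⟩
  intro n f U₀hat M hf hM t ht
  have hs0 : (0 : ℝ) < 1 + t := by linarith
  have hM0 : 0 ≤ M := le_trans (norm_nonneg _) (hM 0)
  have hrpow_nn : (0 : ℝ) ≤ (1 + t) ^ (-(1 + 2 * (j : ℝ)) / 6) := Real.rpow_nonneg hs0.le _
  by_cases hInt : IntegrableOn
      (fun ξ : ℝ => ξ ^ (2 * j) * Real.exp (-c * f ξ * t) * ‖U₀hat ξ‖ ^ 2)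
      (Set.Icc (-1 : ℝ) 1) volume
  · -- majorant
    have hg_cont : Continuous fun ξ : ℝ =>
        Real.exp a * M ^ 2 * (ξ ^ (2 * j) * Real.exp (-(a * (1 + t)) * ξ ^ 6)) := by
      fun_prop
    have hgInt : IntegrableOn (fun ξ : ℝ =>
        Real.exp a * M ^ 2 * (ξ ^ (2 * j) * Real.exp (-(a * (1 + t)) * ξ ^ 6)))
        (Set.Icc (-1 : ℝ) 1) volume := hg_cont.integrableOn_Icc
    have hmono : ∀ ξ ∈ Set.Icc (-1 : ℝ) 1,
        ξ ^ (2 * j) * Real.exp (-c * f ξ * t) * ‖U₀hat ξ‖ ^ 2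
          ≤ Real.exp a * M ^ 2 * (ξ ^ (2 * j) * Real.exp (-(a * (1 + t)) * ξ ^ 6)) := by
      intro ξ hξ
      have habs : |ξ| ≤ 1 := abs_le.2 ⟨hξ.1, hξ.2⟩
      have hξ6 : ξ ^ 6 ≤ 1 := by
        calc ξ ^ 6 = |ξ| ^ 6 := (abs_pow ξ 6 ▸ (abs_of_nonneg (by positivity)).symm)
          _ ≤ 1 := pow_le_one₀ (abs_nonneg ξ) habs
      have hexp : Real.exp (-c * f ξ * t) ≤ Real.exp a * Real.exp (-(a * (1 + t)) * ξ ^ 6) := by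
        rw [← Real.exp_add]
        apply Real.exp_le_exp.2
        have h1 : a * ξ ^ 6 ≤ c * f ξ := by
          have := hf ξ habs
          rw [hadef]
          nlinarith
        nlinarith [mul_nonneg (mul_nonneg ha.le (by positivity : (0:ℝ) ≤ ξ ^ 6)) ht]
      have hnorm : ‖U₀hat ξ‖ ^ 2 ≤ M ^ 2 := by
        have := hM ξ
        nlinarith [norm_nonneg (U₀hat ξ)]
      calc ξ ^ (2 * j) * Real.exp (-c * f ξ * t) * ‖U₀hat ξ‖ ^ 2
          ≤ ξ ^ (2 * j) * (Real.exp a * Real.exp (-(a * (1 + t)) * ξ ^ 6)) * M ^ 2 := by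
            apply mul_le_mul
            · exact mul_le_mul_of_nonneg_left hexp ((even_two_mul j).pow_nonneg ξ)
            · exact hnorm
            · positivity
            · exact mul_nonneg ((even_two_mul j).pow_nonneg ξ) (by positivity)
        _ = Real.exp a * M ^ 2 * (ξ ^ (2 * j) * Real.exp (-(a * (1 + t)) * ξ ^ 6)) := by ring
    calc ∫ ξ in Set.Icc (-1 : ℝ) 1,
            ξ ^ (2 * j) * Real.exp (-c * f ξ * t) * ‖U₀hat ξ‖ ^ 2
        ≤ ∫ ξ in Set.Icc (-1 : ℝ) 1,
            Real.exp a * M ^ 2 * (ξ ^ (2 * j) * Real.exp (-(a * (1 + t)) * ξ ^ 6)) :=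
          setIntegral_mono_on hInt hgInt measurableSet_Icc hmono
      _ = Real.exp a * M ^ 2 * ∫ ξ in Set.Icc (-1 : ℝ) 1,
            ξ ^ (2 * j) * Real.exp (-(a * (1 + t)) * ξ ^ 6) := MeasureTheory.integral_const_mul _ _
      _ ≤ Real.exp a * M ^ 2 * ((1 + t) ^ (-(1 + 2 * (j : ℝ)) / 6) * J) := by
          apply mul_le_mul_of_nonneg_left _ (by positivity)
          exact aux_scaling ha j (by linarith)
      _ ≤ Real.exp a * (J + 1) * (1 + t) ^ (-(1 + 2 * (j : ℝ)) / 6) * M ^ 2 := by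
          have h1 : J ≤ J + 1 := by linarith
          have := Real.exp_pos a
          nlinarith [mul_nonneg hrpow_nn (sq_nonneg M), mul_nonneg (mul_nonneg (Real.exp_pos a).le hrpow_nn) (sq_nonneg M)]
  · rw [integral_undef hInt]
    positivity
end

section
/- Let c > 0, j, ℓ ∈ ℕ, and let Û₀ : ℝ → ℂⁿ be measurable with ∫_ℝ |ξ|^{2(j+ℓ)}|Û₀(ξ)|² dξ < ∞. If f(ξ) ≥ (1/5)ξ^{−2} for |ξ| > 1, then ∫_{|ξ|>1} |ξ|^{2j} e^{−c f(ξ) t} |Û₀(ξ)|² dξ ≤ C (1+t)^{−ℓ} ∫_ℝ |ξ|^{2(j+ℓ)} |Û₀(ξ)|² dξ for all t ≥ 0, where C depends only on c and ℓ. -/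
open MeasureTheory Real

lemma pow_div_fact_le_exp (x : ℝ) (hx : 0 ≤ x) (ℓ : ℕ) :
    x ^ ℓ / ℓ.factorial ≤ Real.exp x := by
  calc x ^ ℓ / ℓ.factorial
      ≤ ∑ i ∈ Finset.range (ℓ + 1), x ^ i / i.factorial := by
        refine Finset.single_le_sum (f := fun i => x ^ i / (i.factorial : ℝ)) ?_ ?_
        · intro i _
          positivity
        · simp
    _ ≤ Real.exp x := Real.sum_le_exp_of_nonneg hx _

lemma key_poly_exp (a : ℝ) (ha : 0 < a) (ℓ : ℕ) (u : ℝ) (hu : 0 ≤ u) :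
    (1 + u) ^ ℓ ≤ 2 ^ ℓ * (1 + ℓ.factorial / a ^ ℓ) * Real.exp (a * u) := by
  have h1 : (1 : ℝ) ≤ Real.exp (a * u) := by
    rw [Real.one_le_exp_iff]; positivity
  have h2 : u ^ ℓ ≤ ℓ.factorial / a ^ ℓ * Real.exp (a * u) := by
    have h := pow_div_fact_le_exp (a * u) (by positivity) ℓ
    rw [mul_pow] at h
    have haℓ : (0:ℝ) < a ^ ℓ := by positivity
    have hfac : (0:ℝ) < (ℓ.factorial : ℝ) := by
      exact_mod_cast Nat.factorial_pos ℓ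
    rw [div_le_iff₀ hfac] at h
    rw [div_mul_eq_mul_div, le_div_iff₀ haℓ]
    nlinarith [h]
  have h3 : (1 + u) ^ ℓ ≤ 2 ^ ℓ * (1 + u ^ ℓ) := by
    rcases le_total u 1 with h | h
    · calc (1 + u) ^ ℓ ≤ 2 ^ ℓ := by
            apply pow_le_pow_left₀ (by linarith) (by linarith)
        _ ≤ 2 ^ ℓ * (1 + u ^ ℓ) := by
            nlinarith [pow_nonneg hu ℓ, pow_pos (show (0:ℝ) < 2 by norm_num) ℓ]
    · calc (1 + u) ^ ℓ ≤ (2 * u) ^ ℓ := by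
            apply pow_le_pow_left₀ (by linarith) (by linarith)
        _ = 2 ^ ℓ * u ^ ℓ := mul_pow 2 u ℓ
        _ ≤ 2 ^ ℓ * (1 + u ^ ℓ) := by
            nlinarith [pow_pos (show (0:ℝ) < 2 by norm_num) ℓ]
  calc (1 + u) ^ ℓ ≤ 2 ^ ℓ * (1 + u ^ ℓ) := h3
    _ ≤ 2 ^ ℓ * (Real.exp (a * u) + ℓ.factorial / a ^ ℓ * Real.exp (a * u)) := by
        apply mul_le_mul_of_nonneg_left (by linarith) (by positivity)
    _ = 2 ^ ℓ * (1 + ℓ.factorial / a ^ ℓ) * Real.exp (a * u) := by ring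

theorem stmt_11 (c : ℝ) (hc : 0 < c) (ℓ : ℕ) :
    ∃ C > 0, ∀ (n : ℕ) (j : ℕ) (f : ℝ → ℝ) (U₀hat : ℝ → EuclideanSpace ℂ (Fin n)),
      (∀ ξ : ℝ, 1 < |ξ| → f ξ ≥ (1 / 5) * ξ ^ (-2 : ℤ)) →
      Integrable (fun ξ : ℝ => |ξ| ^ (2 * (j + ℓ)) * ‖U₀hat ξ‖ ^ 2) →
      ∀ t : ℝ, 0 ≤ t →
        ∫ ξ in {ξ : ℝ | 1 < |ξ|},
            |ξ| ^ (2 * j) * Real.exp (-c * f ξ * t) * ‖U₀hat ξ‖ ^ 2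
          ≤ C * (1 + t) ^ (-(ℓ : ℝ)) *
              ∫ ξ : ℝ, |ξ| ^ (2 * (j + ℓ)) * ‖U₀hat ξ‖ ^ 2 := by
  set a : ℝ := c / 5 with ha_def
  have ha : 0 < a := by positivity
  set C : ℝ := 2 ^ ℓ * (1 + ℓ.factorial / a ^ ℓ) with hC_def
  have hCpos : 0 < C := by positivity
  refine ⟨C, hCpos, ?_⟩
  intro n j f U₀hat hf hInt t ht
  have h1t : (0:ℝ) < 1 + t := by linarith
  have hrpow : (1 + t) ^ (-(ℓ : ℝ)) = ((1 + t) ^ ℓ)⁻¹ := by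
    rw [Real.rpow_neg h1t.le, Real.rpow_natCast]
  have hIntnonneg : 0 ≤ ∫ ξ : ℝ, |ξ| ^ (2 * (j + ℓ)) * ‖U₀hat ξ‖ ^ 2 := by
    apply integral_nonneg
    intro ξ; positivity
  set S : Set ℝ := {ξ : ℝ | 1 < |ξ|} with hS_def
  have hSmeas : MeasurableSet S := by
    exact measurableSet_lt measurable_const measurable_id.abs
  -- pointwise inequality on S
  have hpt : ∀ ξ ∈ S, |ξ| ^ (2 * j) * Real.exp (-c * f ξ * t) * ‖U₀hat ξ‖ ^ 2
      ≤ C * (1 + t) ^ (-(ℓ : ℝ)) * (|ξ| ^ (2 * (j + ℓ)) * ‖U₀hat ξ‖ ^ 2) := by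
    intro ξ hξ
    have hξ1 : 1 < |ξ| := hξ
    have hξ0 : (0:ℝ) < ξ ^ 2 := by nlinarith [abs_nonneg ξ, sq_abs ξ]
    have hξsq : 1 < ξ ^ 2 := by nlinarith [sq_abs ξ]
    set u : ℝ := t / ξ ^ 2 with hu_def
    have hu : 0 ≤ u := div_nonneg ht hξ0.le
    -- exp bound
    have hfbd : a * u ≤ c * f ξ * t := by
      have h := hf ξ hξ1
      have : (1/5 : ℝ) * (ξ ^ 2)⁻¹ ≤ f ξ := by
        rw [ge_iff_le] at h
        calc (1/5 : ℝ) * (ξ ^ 2)⁻¹ = (1/5) * ξ ^ (-2 : ℤ) := by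
              rw [zpow_neg, zpow_two]; try ring_nf
          _ ≤ f ξ := h
      have hcalc : a * u = c * ((1/5) * (ξ^2)⁻¹) * t := by
        rw [hu_def, ha_def]; field_simp; try ring
      rw [hcalc]
      apply mul_le_mul_of_nonneg_right _ ht
      apply mul_le_mul_of_nonneg_left this hc.le
    have hexp : Real.exp (-c * f ξ * t) ≤ Real.exp (-(a * u)) := by
      apply Real.exp_le_exp.mpr; linarith
    -- (1+t)^ℓ ≤ (1+u)^ℓ * (ξ^2)^ℓ
    have h1tu : 1 + t ≤ (1 + u) * ξ ^ 2 := by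
      have : (1 + u) * ξ ^ 2 = ξ ^ 2 + t := by
        rw [hu_def, add_mul, div_mul_cancel₀ t hξ0.ne']; ring
      rw [this]; linarith
    have hpow1 : (1 + t) ^ ℓ ≤ (1 + u) ^ ℓ * (ξ ^ 2) ^ ℓ := by
      rw [← mul_pow]
      exact pow_le_pow_left₀ h1t.le h1tu ℓ
    have hkey := key_poly_exp a ha ℓ u hu
    -- main scalar inequality: exp(-cfξt) * (1+t)^ℓ ≤ C * (ξ^2)^ℓ
    have hmain : Real.exp (-c * f ξ * t) * (1 + t) ^ ℓ ≤ C * (ξ ^ 2) ^ ℓ := by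
      have e1 : Real.exp (-c * f ξ * t) * (1 + t) ^ ℓ
          ≤ Real.exp (-(a*u)) * ((1 + u) ^ ℓ * (ξ ^ 2) ^ ℓ) := by
        apply mul_le_mul hexp hpow1 (by positivity) (Real.exp_pos _).le
      have e2 : Real.exp (-(a*u)) * (1 + u) ^ ℓ ≤ C := by
        rw [Real.exp_neg]
        rw [inv_mul_le_iff₀ (Real.exp_pos _)]
        calc (1 + u) ^ ℓ ≤ C * Real.exp (a * u) := hkey
          _ = Real.exp (a * u) * C := mul_comm _ _
      calc Real.exp (-c * f ξ * t) * (1 + t) ^ ℓ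
          ≤ Real.exp (-(a*u)) * ((1 + u) ^ ℓ * (ξ ^ 2) ^ ℓ) := e1
        _ = Real.exp (-(a*u)) * (1 + u) ^ ℓ * (ξ ^ 2) ^ ℓ := by ring
        _ ≤ C * (ξ ^ 2) ^ ℓ := by
            apply mul_le_mul_of_nonneg_right e2 (by positivity)
    -- assemble
    rw [hrpow]
    have habs : |ξ| ^ (2 * (j + ℓ)) = |ξ| ^ (2 * j) * (ξ ^ 2) ^ ℓ := by
      rw [show 2 * (j + ℓ) = 2 * j + 2 * ℓ by ring, pow_add]
      congr 1
      rw [pow_mul, sq_abs]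
    rw [habs]
    have h1tℓ : (0:ℝ) < (1 + t) ^ ℓ := by positivity
    rw [show C * ((1 + t) ^ ℓ)⁻¹ * (|ξ| ^ (2 * j) * (ξ ^ 2) ^ ℓ * ‖U₀hat ξ‖ ^ 2)
        = C * (|ξ| ^ (2 * j) * (ξ ^ 2) ^ ℓ * ‖U₀hat ξ‖ ^ 2) / (1 + t) ^ ℓ by ring]
    rw [le_div_iff₀ h1tℓ]
    have := mul_le_mul_of_nonneg_left hmain
      (show (0:ℝ) ≤ |ξ| ^ (2 * j) * ‖U₀hat ξ‖ ^ 2 by positivity)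
    nlinarith [this]
  -- now the integral argument
  set F : ℝ → ℝ := fun ξ => |ξ| ^ (2 * j) * Real.exp (-c * f ξ * t) * ‖U₀hat ξ‖ ^ 2
  set G : ℝ → ℝ := fun ξ => C * (1 + t) ^ (-(ℓ : ℝ)) * (|ξ| ^ (2 * (j + ℓ)) * ‖U₀hat ξ‖ ^ 2)
  have hGint : Integrable G := hInt.const_mul _
  have hGnonneg : ∀ ξ, 0 ≤ G ξ := by
    intro ξ
    have : (0:ℝ) ≤ (1 + t) ^ (-(ℓ : ℝ)) := Real.rpow_nonneg h1t.le _
    positivity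
  by_cases hFi : IntegrableOn F S
  · calc ∫ ξ in S, F ξ ≤ ∫ ξ in S, G ξ := by
          apply setIntegral_mono_on hFi (hGint.integrableOn) hSmeas hpt
      _ ≤ ∫ ξ, G ξ := by
          apply setIntegral_le_integral hGint
          filter_upwards with ξ using hGnonneg ξ
      _ = C * (1 + t) ^ (-(ℓ : ℝ)) * ∫ ξ : ℝ, |ξ| ^ (2 * (j + ℓ)) * ‖U₀hat ξ‖ ^ 2 := by
          exact integral_const_mul _ _
  · rw [integral_undef hFi]
    have : (0:ℝ) ≤ (1 + t) ^ (-(ℓ : ℝ)) := Real.rpow_nonneg h1t.le _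
    positivity
end

section
/- Suppose Û : ℝ × [0,∞) → ℂⁿ satisfies the pointwise bound |Û(ξ,t)|² ≤ c̃ e^{−c f(ξ) t} |Û₀(ξ)|² with c, c̃ > 0, where f(ξ) ≥ (1/5)ξ⁶ for |ξ| ≤ 1 and f(ξ) ≥ (1/5)ξ^{−2} for |ξ| > 1. If Û₀ is bounded with ‖Û₀‖_∞ ≤ M and ∫_ℝ |ξ|^{2(j+ℓ)}|Û₀(ξ)|² dξ < ∞ for given j, ℓ ∈ ℕ, then there is c₀ > 0 such that (∫_ℝ ξ^{2j}|Û(ξ,t)|² dξ)^{1/2} ≤ c₀ (1+t)^{−1/12 − j/6} M + c₀ (1+t)^{−ℓ/2} (∫_ℝ |ξ|^{2(j+ℓ)}|Û₀(ξ)|² dξ)^{1/2} for all t ≥ 0. -/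
set_option maxHeartbeats 1000000

open MeasureTheory Real

private lemma pow_le_fact_mul_exp (m : ℕ) {x : ℝ} (hx : 0 ≤ x) :
    x ^ m ≤ m.factorial * Real.exp x := by
  have h := Real.sum_le_exp_of_nonneg hx (m + 1)
  have h2 : x ^ m / m.factorial ≤ ∑ i ∈ Finset.range (m + 1), x ^ i / i.factorial := by
    exact Finset.single_le_sum (f := fun i => x ^ i / (i.factorial : ℝ))
      (fun i _ => by positivity) (Finset.self_mem_range_succ m)
  have hm : (0 : ℝ) < m.factorial := by positivity
  have := (h2.trans h)
  calc x ^ m = (x ^ m / m.factorial) * m.factorial := by field_simp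
    _ ≤ Real.exp x * m.factorial := mul_le_mul_of_nonneg_right this hm.le
    _ = m.factorial * Real.exp x := mul_comm _ _

private lemma exp_neg_le_fact_div (m : ℕ) {x : ℝ} (hx : 0 < x) :
    Real.exp (-x) ≤ m.factorial / x ^ m := by
  rw [le_div_iff₀ (by positivity)]
  calc Real.exp (-x) * x ^ m ≤ Real.exp (-x) * (m.factorial * Real.exp x) := by
        apply mul_le_mul_of_nonneg_left (pow_le_fact_mul_exp m hx.le) (Real.exp_nonneg _)
    _ = m.factorial * (Real.exp (-x) * Real.exp x) := by ring
    _ = m.factorial := by rw [← Real.exp_add]; simp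

private lemma sqrt_add_le' {a b : ℝ} (ha : 0 ≤ a) (hb : 0 ≤ b) :
    Real.sqrt (a + b) ≤ Real.sqrt a + Real.sqrt b := by
  rw [← Real.sqrt_sq (by positivity : (0:ℝ) ≤ Real.sqrt a + Real.sqrt b)]
  apply Real.sqrt_le_sqrt
  nlinarith [Real.sqrt_nonneg a, Real.sqrt_nonneg b, Real.sq_sqrt ha, Real.sq_sqrt hb]

private lemma high_aux (a : ℝ) (ha : 0 < a) (ℓ : ℕ) (t ξ : ℝ) (ht : 0 ≤ t) (hξ : 1 < |ξ|) :
    Real.exp (-(a * t * ξ ^ (-2 : ℤ))) ≤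
      (Real.exp a * ℓ.factorial / a ^ ℓ) * (1 + t) ^ (-(ℓ : ℝ)) * ξ ^ (2 * ℓ) := by
  set s : ℝ := 1 + t with hs
  have hs0 : (0:ℝ) < s := by linarith
  have hs1 : (1:ℝ) ≤ s := by linarith
  have hξ2 : (1:ℝ) ≤ ξ ^ 2 := by nlinarith [abs_nonneg ξ, sq_abs ξ]
  have hξ2pos : (0:ℝ) < ξ ^ 2 := by linarith
  have hy : ξ ^ (-2 : ℤ) = (ξ ^ 2)⁻¹ := by
    rw [zpow_neg, zpow_two, sq]
  set y : ℝ := (ξ ^ 2)⁻¹ with hydef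
  have hy0 : 0 < y := by positivity
  have hy1 : y ≤ 1 := by
    rw [hydef]; exact inv_le_one_of_one_le₀ hξ2
  have hx0 : 0 < a * s * y := by positivity
  have step1 : Real.exp (-(a * t * ξ ^ (-2:ℤ))) = Real.exp (a * y) * Real.exp (-(a * s * y)) := by
    rw [hy, ← Real.exp_add]
    congr 1
    rw [hs]; ring
  have step2 : Real.exp (a * y) ≤ Real.exp a := by
    apply Real.exp_le_exp.mpr
    nlinarith
  have step3 : Real.exp (-(a * s * y)) ≤ ℓ.factorial / (a * s * y) ^ ℓ :=
    exp_neg_le_fact_div ℓ hx0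
  have hxpow : (a * s * y) ^ ℓ = a ^ ℓ * s ^ ℓ * ((ξ ^ 2) ^ ℓ)⁻¹ := by
    rw [mul_pow, mul_pow, hydef, inv_pow]
  have hsrpow : s ^ (-(ℓ : ℝ)) = (s ^ ℓ)⁻¹ := by
    rw [Real.rpow_neg hs0.le, Real.rpow_natCast]
  have hξpow : (ξ ^ 2) ^ ℓ = ξ ^ (2 * ℓ) := by rw [pow_mul]
  calc Real.exp (-(a * t * ξ ^ (-2:ℤ)))
      = Real.exp (a * y) * Real.exp (-(a * s * y)) := step1
    _ ≤ Real.exp a * (ℓ.factorial / (a * s * y) ^ ℓ) := by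
        apply mul_le_mul step2 step3 (Real.exp_nonneg _) (Real.exp_nonneg _)
    _ = (Real.exp a * ℓ.factorial / a ^ ℓ) * (s ^ ℓ)⁻¹ * ξ ^ (2 * ℓ) := by
        rw [hxpow, ← hξpow]
        have h1 : (0:ℝ) < (ξ ^ 2) ^ ℓ := by positivity
        have h2 : (0:ℝ) < a ^ ℓ := by positivity
        have h3 : (0:ℝ) < s ^ ℓ := by positivity
        field_simp
    _ = (Real.exp a * ℓ.factorial / a ^ ℓ) * s ^ (-(ℓ : ℝ)) * ξ ^ (2 * ℓ) := by rw [hsrpow]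

private lemma low_freq_bound (a : ℝ) (ha : 0 < a) (j : ℕ) (t : ℝ) (ht : 0 ≤ t) :
    ∫ ξ in (-1:ℝ)..1, ξ ^ (2 * j) * Real.exp (-(a * t * ξ ^ 6))
      ≤ (2 / (2 * (j:ℝ) + 1) +
          2 * (Real.exp a * (j+1).factorial / a ^ (j+1)) / (4 * (j:ℝ) + 5)) *
        (1 + t) ^ (-((2 * (j:ℝ) + 1) / 6)) := by
  set s : ℝ := 1 + t with hsdef
  have hs0 : (0:ℝ) < s := by linarith
  have hs1 : (1:ℝ) ≤ s := by linarith
  set ξ₀ : ℝ := s ^ (-(1/6 : ℝ)) with hξ₀def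
  have hξ₀pos : 0 < ξ₀ := Real.rpow_pos_of_pos hs0 _
  have hξ₀le1 : ξ₀ ≤ 1 := Real.rpow_le_one_of_one_le_of_nonpos hs1 (by norm_num)
  set ψ : ℝ → ℝ := fun ξ => ξ ^ (2 * j) * Real.exp (-(a * t * ξ ^ 6)) with hψdef
  have hψc : Continuous ψ := by fun_prop
  have hII : ∀ u v : ℝ, IntervalIntegrable ψ volume u v := fun u v =>
    hψc.intervalIntegrable u v
  set m : ℤ := -(4 * (j:ℤ) + 6) with hmdef
  set Kc : ℝ := Real.exp a * ((j+1).factorial : ℝ) / a ^ (j+1) * (s ^ (j+1))⁻¹ with hKcdef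
  have hKc0 : 0 ≤ Kc := by positivity
  -- pointwise bound on the outer region
  have hpt : ∀ ξ ∈ Set.Icc ξ₀ 1, ψ ξ ≤ Kc * ξ ^ m := by
    rintro ξ ⟨h1, h2⟩
    have hξpos : 0 < ξ := lt_of_lt_of_le hξ₀pos h1
    have hξ6 : ξ ^ 6 ≤ 1 := pow_le_one₀ hξpos.le h2
    have e1 : Real.exp (-(a * t * ξ ^ 6)) ≤ Real.exp a * Real.exp (-(a * s * ξ ^ 6)) := by
      rw [← Real.exp_add]
      apply Real.exp_le_exp.mpr
      have h6 : 0 ≤ ξ ^ 6 := by positivity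
      have hexp : a * s * ξ ^ 6 = a * ξ ^ 6 + a * t * ξ ^ 6 := by rw [hsdef]; ring
      nlinarith
    have e2 : Real.exp (-(a * s * ξ ^ 6)) ≤
        ((j+1).factorial : ℝ) / (a * s * ξ ^ 6) ^ (j+1) :=
      exp_neg_le_fact_div _ (mul_pos (mul_pos ha hs0) (pow_pos hξpos 6))
    have hz : ξ ^ m = ξ ^ (2 * j) * (ξ ^ (6 * j + 6))⁻¹ := by
      have hm' : m = ((2 * j : ℕ) : ℤ) + -((6 * j + 6 : ℕ) : ℤ) := by
        rw [hmdef]; omega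
      rw [hm', zpow_add₀ hξpos.ne', zpow_natCast, zpow_neg, zpow_natCast]
    have hA : (a * s * ξ ^ 6) ^ (j+1) = a ^ (j+1) * s ^ (j+1) * ξ ^ (6 * j + 6) := by
      rw [mul_pow, mul_pow, ← pow_mul, Nat.mul_add, Nat.mul_one]
    have hle2 : ψ ξ ≤ ξ ^ (2 * j) * (Real.exp a * (((j+1).factorial : ℝ) / (a * s * ξ ^ 6) ^ (j+1))) := by
      have h0 : 0 ≤ ξ ^ (2 * j) := by positivity
      apply mul_le_mul_of_nonneg_left _ h0
      calc Real.exp (-(a * t * ξ ^ 6)) ≤ Real.exp a * Real.exp (-(a * s * ξ ^ 6)) := e1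
        _ ≤ Real.exp a * (((j+1).factorial : ℝ) / (a * s * ξ ^ 6) ^ (j+1)) := by
            apply mul_le_mul_of_nonneg_left e2 (Real.exp_nonneg _)
    refine hle2.trans (le_of_eq ?_)
    rw [hz, hA, hKcdef]
    have hξp : (0:ℝ) < ξ ^ (6 * j + 6) := pow_pos hξpos _
    field_simp
  -- evenness
  have hψeven : ∀ x : ℝ, ψ (-x) = ψ x := by
    intro x
    simp only [hψdef]
    rw [Even.neg_pow (even_two_mul j), Even.neg_pow (⟨3, rfl⟩ : Even 6)]
  have hneg : (∫ ξ in (-1:ℝ)..(-ξ₀), ψ ξ) = ∫ ξ in ξ₀..1, ψ ξ := by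
    have h := intervalIntegral.integral_comp_neg (a := ξ₀) (b := 1) ψ
    rw [← h]
    apply intervalIntegral.integral_congr
    intro x _
    exact hψeven x
  -- splitting
  have hsplit : (∫ ξ in (-1:ℝ)..1, ψ ξ)
      = (∫ ξ in (-1:ℝ)..(-ξ₀), ψ ξ) + (∫ ξ in (-ξ₀)..ξ₀, ψ ξ) + (∫ ξ in ξ₀..1, ψ ξ) := by
    rw [intervalIntegral.integral_add_adjacent_intervals (hII (-1) (-ξ₀)) (hII (-ξ₀) ξ₀),
      intervalIntegral.integral_add_adjacent_intervals (hII (-1) ξ₀) (hII ξ₀ 1)]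
  -- mid bound
  have hmid : (∫ ξ in (-ξ₀)..ξ₀, ψ ξ) ≤ 2 * ξ₀ ^ (2 * j + 1) / (2 * (j:ℝ) + 1) := by
    have h1 : (∫ ξ in (-ξ₀)..ξ₀, ψ ξ) ≤ ∫ ξ in (-ξ₀)..ξ₀, ξ ^ (2 * j) := by
      apply intervalIntegral.integral_mono_on (by linarith) (hII _ _)
        ((continuous_pow _).intervalIntegrable _ _)
      intro ξ _
      have h0 : 0 ≤ ξ ^ (2 * j) := by rw [pow_mul]; positivity
      have hexp : Real.exp (-(a * t * ξ ^ 6)) ≤ 1 := by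
        apply Real.exp_le_one_iff.mpr
        have : 0 ≤ a * t * ξ ^ 6 := by positivity
        linarith
      exact mul_le_of_le_one_right h0 hexp
    refine h1.trans (le_of_eq ?_)
    rw [integral_pow]
    rw [Odd.neg_pow ⟨j, by ring⟩]
    push_cast
    ring
  -- right bound
  have hrt : (∫ ξ in ξ₀..1, ψ ξ) ≤ Kc * ξ₀ ^ (m + 1) / (4 * (j:ℝ) + 5) := by
    have hzero : (0:ℝ) ∉ Set.uIcc ξ₀ 1 := Set.notMem_uIcc_of_lt hξ₀pos one_pos
    have h1 : (∫ ξ in ξ₀..1, ψ ξ) ≤ ∫ ξ in ξ₀..1, Kc * ξ ^ m := by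
      apply intervalIntegral.integral_mono_on hξ₀le1 (hII _ _)
        ((intervalIntegral.intervalIntegrable_zpow (Or.inr hzero)).const_mul Kc)
      exact hpt
    refine h1.trans ?_
    rw [intervalIntegral.integral_const_mul, integral_zpow (Or.inr ⟨by omega, hzero⟩)]
    have hm1 : ((m:ℝ) + 1) = -(4 * (j:ℝ) + 5) := by push_cast [hmdef]; ring
    have hp1 : (1:ℝ) ^ (m + 1) = 1 := one_zpow _
    have hppos : (0:ℝ) ≤ ξ₀ ^ (m + 1) := (zpow_pos hξ₀pos _).le
    rw [hp1, hm1]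
    have h45 : (0:ℝ) < 4 * (j:ℝ) + 5 := by positivity
    calc Kc * ((1 - ξ₀ ^ (m + 1)) / -(4 * (j:ℝ) + 5))
        = Kc * (-((1 - ξ₀ ^ (m + 1)) / (4 * (j:ℝ) + 5))) := by rw [div_neg]
      _ = Kc * ((ξ₀ ^ (m + 1) - 1) / (4 * (j:ℝ) + 5)) := by ring
      _ ≤ Kc * (ξ₀ ^ (m + 1) / (4 * (j:ℝ) + 5)) := by
          apply mul_le_mul_of_nonneg_left _ hKc0
          gcongr
          linarith
      _ = Kc * ξ₀ ^ (m + 1) / (4 * (j:ℝ) + 5) := by ring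
  -- rpow computations
  have hxA : ξ₀ ^ (2 * j + 1) = s ^ (-((2 * (j:ℝ) + 1) / 6)) := by
    rw [← Real.rpow_natCast ξ₀ (2 * j + 1), hξ₀def, ← Real.rpow_mul hs0.le]
    congr 1
    push_cast
    ring
  have hxB : Kc * ξ₀ ^ (m + 1) =
      (Real.exp a * ((j+1).factorial : ℝ) / a ^ (j+1)) * s ^ (-((2 * (j:ℝ) + 1) / 6)) := by
    have e1 : ξ₀ ^ (m + 1) = s ^ ((4 * (j:ℝ) + 5) / 6) := by
      rw [← Real.rpow_intCast ξ₀ (m + 1), hξ₀def, ← Real.rpow_mul hs0.le]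
      congr 1
      push_cast [hmdef]
      ring
    have e2 : (s ^ (j+1) : ℝ)⁻¹ = s ^ (-((j:ℝ) + 1)) := by
      rw [Real.rpow_neg hs0.le, ← Real.rpow_natCast s (j+1)]
      push_cast
      ring_nf
    rw [hKcdef, e1, e2, mul_assoc, ← Real.rpow_add hs0]
    congr 2
    ring
  rw [hsplit, hneg]
  have hK0 : 0 ≤ Real.exp a * ((j+1).factorial : ℝ) / a ^ (j+1) := by positivity
  have hfin : Kc * ξ₀ ^ (m + 1) / (4 * (j:ℝ) + 5)
      = (Real.exp a * ((j+1).factorial : ℝ) / a ^ (j+1)) / (4 * (j:ℝ) + 5)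
        * s ^ (-((2 * (j:ℝ) + 1) / 6)) := by
    rw [hxB]; ring
  calc (∫ ξ in ξ₀..1, ψ ξ) + (∫ ξ in (-ξ₀)..ξ₀, ψ ξ) + (∫ ξ in ξ₀..1, ψ ξ)
      ≤ Kc * ξ₀ ^ (m + 1) / (4 * (j:ℝ) + 5) + 2 * ξ₀ ^ (2 * j + 1) / (2 * (j:ℝ) + 1)
        + Kc * ξ₀ ^ (m + 1) / (4 * (j:ℝ) + 5) := by
        exact add_le_add (add_le_add hrt hmid) hrt
    _ = (2 / (2 * (j:ℝ) + 1) +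
          2 * (Real.exp a * (j+1).factorial / a ^ (j+1)) / (4 * (j:ℝ) + 5)) *
        s ^ (-((2 * (j:ℝ) + 1) / 6)) := by
        rw [hfin, hxA]
        ring

theorem stmt_15 (c ctilde : ℝ) (hc : 0 < c) (hct : 0 < ctilde)
    (n : ℕ) (Uhat : ℝ → ℝ → EuclideanSpace ℂ (Fin n))
    (U₀hat : ℝ → EuclideanSpace ℂ (Fin n)) (f : ℝ → ℝ) (M : ℝ) (j ℓ : ℕ)
    (hbound : ∀ ξ t : ℝ, 0 ≤ t →
      ‖Uhat ξ t‖ ^ 2 ≤ ctilde * Real.exp (-c * f ξ * t) * ‖U₀hat ξ‖ ^ 2)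
    (hflow : ∀ ξ : ℝ, |ξ| ≤ 1 → f ξ ≥ (1 / 5) * ξ ^ 6)
    (hfhigh : ∀ ξ : ℝ, 1 < |ξ| → f ξ ≥ (1 / 5) * ξ ^ (-2 : ℤ))
    (hM : ∀ ξ : ℝ, ‖U₀hat ξ‖ ≤ M)
    (hint : Integrable (fun ξ : ℝ => |ξ| ^ (2 * (j + ℓ)) * ‖U₀hat ξ‖ ^ 2)) :
    ∃ c₀ > 0, ∀ t : ℝ, 0 ≤ t →
      Real.sqrt (∫ ξ : ℝ, ξ ^ (2 * j) * ‖Uhat ξ t‖ ^ 2)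
        ≤ c₀ * (1 + t) ^ (-(1 / 12 : ℝ) - (j : ℝ) / 6) * M
          + c₀ * (1 + t) ^ (-(ℓ : ℝ) / 2) *
              Real.sqrt (∫ ξ : ℝ, |ξ| ^ (2 * (j + ℓ)) * ‖U₀hat ξ‖ ^ 2) := by
  set a : ℝ := c / 5 with hadef
  have ha : 0 < a := by positivity
  set K : ℝ := Real.exp a * ((j+1).factorial : ℝ) / a ^ (j+1) with hKdef
  set Clow : ℝ := 2 / (2 * (j:ℝ) + 1) + 2 * K / (4 * (j:ℝ) + 5) with hClowdef
  set Chigh : ℝ := Real.exp a * (ℓ.factorial : ℝ) / a ^ ℓ with hChighdef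
  have hK0 : 0 < K := by positivity
  have hClow0 : 0 < Clow := by positivity
  have hChigh0 : 0 < Chigh := by positivity
  have hM0 : 0 ≤ M := le_trans (norm_nonneg _) (hM 0)
  have hI₀0 : 0 ≤ ∫ ξ : ℝ, |ξ| ^ (2 * (j + ℓ)) * ‖U₀hat ξ‖ ^ 2 :=
    integral_nonneg fun ξ => by positivity
  refine ⟨Real.sqrt (ctilde * Clow) + Real.sqrt (ctilde * Chigh) + 1, by positivity, ?_⟩
  intro t ht
  have hs0 : (0:ℝ) < 1 + t := by linarith
  set ψ : ℝ → ℝ := fun ξ => ξ ^ (2 * j) * Real.exp (-(a * t * ξ ^ 6)) with hψdef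
  have hψc : Continuous ψ := by fun_prop
  set D : ℝ := ctilde * Chigh * (1 + t) ^ (-(ℓ:ℝ)) with hDdef
  have hD0 : 0 ≤ D := by positivity
  set G : ℝ → ℝ := fun ξ =>
    ctilde * M ^ 2 * Set.indicator (Set.Icc (-1:ℝ) 1) ψ ξ
      + D * (|ξ| ^ (2 * (j + ℓ)) * ‖U₀hat ξ‖ ^ 2) with hGdef
  have hG1 : Integrable (fun ξ : ℝ =>
      ctilde * M ^ 2 * Set.indicator (Set.Icc (-1:ℝ) 1) ψ ξ) :=
    ((hψc.integrableOn_Icc).integrable_indicator measurableSet_Icc).const_mul _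
  have hG2 : Integrable (fun ξ : ℝ => D * (|ξ| ^ (2 * (j + ℓ)) * ‖U₀hat ξ‖ ^ 2)) :=
    hint.const_mul _
  have hGint : Integrable G := hG1.add hG2
  -- pointwise domination
  have hle : ∀ ξ : ℝ, ξ ^ (2 * j) * ‖Uhat ξ t‖ ^ 2 ≤ G ξ := by
    intro ξ
    have hb := hbound ξ t ht
    have hU0sq : ‖U₀hat ξ‖ ^ 2 ≤ M ^ 2 := by
      have := hM ξ
      nlinarith [norm_nonneg (U₀hat ξ)]
    have hx2j : 0 ≤ ξ ^ (2 * j) := by rw [pow_mul]; positivity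
    by_cases hξ : |ξ| ≤ 1
    · have hmem : ξ ∈ Set.Icc (-1:ℝ) 1 := Set.mem_Icc.mpr (abs_le.mp hξ)
      have hexp : Real.exp (-c * f ξ * t) ≤ Real.exp (-(a * t * ξ ^ 6)) := by
        apply Real.exp_le_exp.mpr
        have hf := hflow ξ hξ
        have h5 : c * (1 / 5 * ξ ^ 6) * t ≤ c * f ξ * t :=
          mul_le_mul_of_nonneg_right (mul_le_mul_of_nonneg_left hf hc.le) ht
        have h6 : a * t * ξ ^ 6 = c * (1 / 5 * ξ ^ 6) * t := by rw [hadef]; ring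
        linarith
      have h1 : ‖Uhat ξ t‖ ^ 2 ≤ ctilde * Real.exp (-(a * t * ξ ^ 6)) * M ^ 2 := by
        refine hb.trans ?_
        have e1 : ctilde * Real.exp (-c * f ξ * t) ≤ ctilde * Real.exp (-(a * t * ξ ^ 6)) :=
          mul_le_mul_of_nonneg_left hexp hct.le
        have hnn : 0 ≤ ‖U₀hat ξ‖ ^ 2 := by positivity
        exact mul_le_mul e1 hU0sq hnn (by positivity)
      have h3 : 0 ≤ D * (|ξ| ^ (2 * (j + ℓ)) * ‖U₀hat ξ‖ ^ 2) := by positivity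
      have h2 : ξ ^ (2 * j) * ‖Uhat ξ t‖ ^ 2
          ≤ ctilde * M ^ 2 * Set.indicator (Set.Icc (-1:ℝ) 1) ψ ξ := by
        rw [Set.indicator_of_mem hmem]
        calc ξ ^ (2 * j) * ‖Uhat ξ t‖ ^ 2
            ≤ ξ ^ (2 * j) * (ctilde * Real.exp (-(a * t * ξ ^ 6)) * M ^ 2) :=
              mul_le_mul_of_nonneg_left h1 hx2j
          _ = ctilde * M ^ 2 * ψ ξ := by rw [hψdef]; ring
      calc ξ ^ (2 * j) * ‖Uhat ξ t‖ ^ 2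
          ≤ ctilde * M ^ 2 * Set.indicator (Set.Icc (-1:ℝ) 1) ψ ξ := h2
        _ ≤ G ξ := le_add_of_nonneg_right h3
    · push_neg at hξ
      have hind : Set.indicator (Set.Icc (-1:ℝ) 1) ψ ξ = 0 := by
        apply Set.indicator_of_notMem
        intro hmem
        exact absurd (abs_le.mpr (Set.mem_Icc.mp hmem)) (not_le.mpr hξ)
      have hexp : Real.exp (-c * f ξ * t) ≤ Real.exp (-(a * t * ξ ^ (-2:ℤ))) := by
        apply Real.exp_le_exp.mpr
        have hf := hfhigh ξ hξ
        have h5 : c * (1 / 5 * ξ ^ (-2:ℤ)) * t ≤ c * f ξ * t :=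
          mul_le_mul_of_nonneg_right (mul_le_mul_of_nonneg_left hf hc.le) ht
        have h6 : a * t * ξ ^ (-2:ℤ) = c * (1 / 5 * ξ ^ (-2:ℤ)) * t := by rw [hadef]; ring
        linarith
      have hhigh := high_aux a ha ℓ t ξ ht hξ
      have habs : ξ ^ (2 * j) * ξ ^ (2 * ℓ) = |ξ| ^ (2 * (j + ℓ)) := by
        rw [← pow_add, Even.pow_abs ⟨j + ℓ, by ring⟩]
        congr 1
        ring
      have hξ2ℓ : (0:ℝ) ≤ ξ ^ (2 * ℓ) := by rw [pow_mul]; positivity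
      have h1 : ‖Uhat ξ t‖ ^ 2
          ≤ ctilde * (Chigh * (1 + t) ^ (-(ℓ:ℝ)) * ξ ^ (2 * ℓ)) * ‖U₀hat ξ‖ ^ 2 := by
        refine hb.trans ?_
        have e2 : Real.exp (-c * f ξ * t) ≤ Chigh * (1 + t) ^ (-(ℓ:ℝ)) * ξ ^ (2 * ℓ) :=
          hexp.trans hhigh
        have hnn : 0 ≤ ‖U₀hat ξ‖ ^ 2 := by positivity
        apply mul_le_mul_of_nonneg_right _ hnn
        exact mul_le_mul_of_nonneg_left e2 hct.le
      calc ξ ^ (2 * j) * ‖Uhat ξ t‖ ^ 2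
          ≤ ξ ^ (2 * j) * (ctilde * (Chigh * (1 + t) ^ (-(ℓ:ℝ)) * ξ ^ (2 * ℓ)) * ‖U₀hat ξ‖ ^ 2) :=
            mul_le_mul_of_nonneg_left h1 hx2j
        _ = D * ((ξ ^ (2 * j) * ξ ^ (2 * ℓ)) * ‖U₀hat ξ‖ ^ 2) := by rw [hDdef]; ring
        _ = D * (|ξ| ^ (2 * (j + ℓ)) * ‖U₀hat ξ‖ ^ 2) := by rw [habs]
        _ ≤ G ξ := by
            have h0 : 0 ≤ ctilde * M ^ 2 * Set.indicator (Set.Icc (-1:ℝ) 1) ψ ξ := by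
              rw [hind]; simp
            exact le_add_of_nonneg_left h0
  have hmono : (∫ ξ : ℝ, ξ ^ (2 * j) * ‖Uhat ξ t‖ ^ 2) ≤ ∫ ξ : ℝ, G ξ :=
    integral_mono_of_nonneg
      (Filter.Eventually.of_forall fun ξ =>
        mul_nonneg (by rw [pow_mul]; positivity) (by positivity))
      hGint (Filter.Eventually.of_forall hle)
  have hIcc : (∫ ξ : ℝ, Set.indicator (Set.Icc (-1:ℝ) 1) ψ ξ) = ∫ ξ in (-1:ℝ)..1, ψ ξ := by
    rw [integral_indicator measurableSet_Icc,
      intervalIntegral.integral_of_le (by norm_num : (-1:ℝ) ≤ 1),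
      integral_Icc_eq_integral_Ioc]
  have hGeq : (∫ ξ : ℝ, G ξ)
      = ctilde * M ^ 2 * (∫ ξ in (-1:ℝ)..1, ψ ξ)
        + D * ∫ ξ : ℝ, |ξ| ^ (2 * (j + ℓ)) * ‖U₀hat ξ‖ ^ 2 := by
    rw [hGdef, integral_add hG1 hG2, integral_const_mul, integral_const_mul, hIcc]
  have hlow := low_freq_bound a ha j t ht
  have hfinal : (∫ ξ : ℝ, ξ ^ (2 * j) * ‖Uhat ξ t‖ ^ 2)
      ≤ ctilde * Clow * (M ^ 2 * (1 + t) ^ (-((2 * (j:ℝ) + 1) / 6)))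
        + ctilde * Chigh * ((1 + t) ^ (-(ℓ:ℝ)) * ∫ ξ : ℝ, |ξ| ^ (2 * (j + ℓ)) * ‖U₀hat ξ‖ ^ 2) := by
    refine hmono.trans ?_
    rw [hGeq]
    have e1 : ctilde * M ^ 2 * (∫ ξ in (-1:ℝ)..1, ψ ξ)
        ≤ ctilde * Clow * (M ^ 2 * (1 + t) ^ (-((2 * (j:ℝ) + 1) / 6))) := by
      have := mul_le_mul_of_nonneg_left hlow (by positivity : (0:ℝ) ≤ ctilde * M ^ 2)
      calc ctilde * M ^ 2 * (∫ ξ in (-1:ℝ)..1, ψ ξ)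
          ≤ ctilde * M ^ 2 * (Clow * (1 + t) ^ (-((2 * (j:ℝ) + 1) / 6))) := by
            rw [hClowdef, hKdef]
            exact this
        _ = ctilde * Clow * (M ^ 2 * (1 + t) ^ (-((2 * (j:ℝ) + 1) / 6))) := by ring
    have e2 : D * (∫ ξ : ℝ, |ξ| ^ (2 * (j + ℓ)) * ‖U₀hat ξ‖ ^ 2)
        = ctilde * Chigh * ((1 + t) ^ (-(ℓ:ℝ)) * ∫ ξ : ℝ, |ξ| ^ (2 * (j + ℓ)) * ‖U₀hat ξ‖ ^ 2) := by
      rw [hDdef]; ring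
    linarith
  -- take square roots
  have hsq1 : Real.sqrt (ctilde * Clow * (M ^ 2 * (1 + t) ^ (-((2 * (j:ℝ) + 1) / 6))))
      = Real.sqrt (ctilde * Clow) * ((1 + t) ^ (-(1 / 12 : ℝ) - (j : ℝ) / 6) * M) := by
    rw [Real.sqrt_mul (by positivity), Real.sqrt_mul (sq_nonneg M), Real.sqrt_sq hM0]
    have e : Real.sqrt ((1 + t) ^ (-((2 * (j:ℝ) + 1) / 6)))
        = (1 + t) ^ (-(1 / 12 : ℝ) - (j : ℝ) / 6) := by
      rw [Real.sqrt_eq_rpow, ← Real.rpow_mul hs0.le]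
      congr 1
      ring
    rw [e]
    ring
  have hsq2 : Real.sqrt (ctilde * Chigh *
        ((1 + t) ^ (-(ℓ:ℝ)) * ∫ ξ : ℝ, |ξ| ^ (2 * (j + ℓ)) * ‖U₀hat ξ‖ ^ 2))
      = Real.sqrt (ctilde * Chigh) * ((1 + t) ^ (-(ℓ:ℝ) / 2) *
          Real.sqrt (∫ ξ : ℝ, |ξ| ^ (2 * (j + ℓ)) * ‖U₀hat ξ‖ ^ 2)) := by
    rw [Real.sqrt_mul (by positivity), Real.sqrt_mul (Real.rpow_nonneg hs0.le _)]
    have e : Real.sqrt ((1 + t) ^ (-(ℓ:ℝ)))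
        = (1 + t) ^ (-(ℓ:ℝ) / 2) := by
      rw [Real.sqrt_eq_rpow, ← Real.rpow_mul hs0.le]
      congr 1
      ring
    rw [e]
  have hc₀1 : Real.sqrt (ctilde * Clow)
      ≤ Real.sqrt (ctilde * Clow) + Real.sqrt (ctilde * Chigh) + 1 := by
    have := Real.sqrt_nonneg (ctilde * Chigh); linarith
  have hc₀2 : Real.sqrt (ctilde * Chigh)
      ≤ Real.sqrt (ctilde * Clow) + Real.sqrt (ctilde * Chigh) + 1 := by
    have := Real.sqrt_nonneg (ctilde * Clow); linarith
  calc Real.sqrt (∫ ξ : ℝ, ξ ^ (2 * j) * ‖Uhat ξ t‖ ^ 2)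
      ≤ Real.sqrt (ctilde * Clow * (M ^ 2 * (1 + t) ^ (-((2 * (j:ℝ) + 1) / 6)))
          + ctilde * Chigh * ((1 + t) ^ (-(ℓ:ℝ)) *
              ∫ ξ : ℝ, |ξ| ^ (2 * (j + ℓ)) * ‖U₀hat ξ‖ ^ 2)) := Real.sqrt_le_sqrt hfinal
    _ ≤ Real.sqrt (ctilde * Clow * (M ^ 2 * (1 + t) ^ (-((2 * (j:ℝ) + 1) / 6))))
        + Real.sqrt (ctilde * Chigh * ((1 + t) ^ (-(ℓ:ℝ)) *
            ∫ ξ : ℝ, |ξ| ^ (2 * (j + ℓ)) * ‖U₀hat ξ‖ ^ 2)) :=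
        sqrt_add_le' (by positivity)
          (mul_nonneg (by positivity) (mul_nonneg (Real.rpow_nonneg hs0.le _) hI₀0))
    _ = Real.sqrt (ctilde * Clow) * ((1 + t) ^ (-(1 / 12 : ℝ) - (j : ℝ) / 6) * M)
        + Real.sqrt (ctilde * Chigh) * ((1 + t) ^ (-(ℓ:ℝ) / 2) *
            Real.sqrt (∫ ξ : ℝ, |ξ| ^ (2 * (j + ℓ)) * ‖U₀hat ξ‖ ^ 2)) := by
        rw [hsq1, hsq2]
    _ ≤ (Real.sqrt (ctilde * Clow) + Real.sqrt (ctilde * Chigh) + 1) *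
          ((1 + t) ^ (-(1 / 12 : ℝ) - (j : ℝ) / 6) * M)
        + (Real.sqrt (ctilde * Clow) + Real.sqrt (ctilde * Chigh) + 1) *
          ((1 + t) ^ (-(ℓ:ℝ) / 2) *
            Real.sqrt (∫ ξ : ℝ, |ξ| ^ (2 * (j + ℓ)) * ‖U₀hat ξ‖ ^ 2)) :=
        add_le_add
          (mul_le_mul_of_nonneg_right hc₀1
            (mul_nonneg (Real.rpow_nonneg hs0.le _) hM0))
          (mul_le_mul_of_nonneg_right hc₀2
            (mul_nonneg (Real.rpow_nonneg hs0.le _) (Real.sqrt_nonneg _)))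
    _ = (Real.sqrt (ctilde * Clow) + Real.sqrt (ctilde * Chigh) + 1) *
          (1 + t) ^ (-(1 / 12 : ℝ) - (j : ℝ) / 6) * M
        + (Real.sqrt (ctilde * Clow) + Real.sqrt (ctilde * Chigh) + 1) *
          (1 + t) ^ (-(ℓ:ℝ) / 2) *
            Real.sqrt (∫ ξ : ℝ, |ξ| ^ (2 * (j + ℓ)) * ‖U₀hat ξ‖ ^ 2) := by
        ring
end
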